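/- For the second Ding–Helleseth sequence and for j ∈ {0,1}, every a ∈ D_j satisfies S(ξ_N^a) = −η_j^{(N)}. -/

import Mathlib

open Finset

/-- `ξ_N = exp(2πi/N)`, a primitive `N`-th root of unity. -/
noncomputable def DHxi (N : ℕ) : ℂ := Complex.exp (2 * Real.pi * Complex.I / N)

/-- Gauss period: `Σ_{a ∈ D} ξ_N^a`. -/
noncomputable def DHeta (N : ℕ) (D : Finset (ZMod N)) : ℂ := ∑ a ∈ D, DHxi N ^ a.val

/-- Ding–Helleseth generalized cyclotomic class
`D₀ = {g^(2t) x^i : 0 ≤ t ≤ e/2 - 1, i ∈ {0,1}}` in `ZMod (p*q)`, where `e = (p-1)(q-1)/2`. -/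
def DHD0 (p q g x : ℕ) : Finset (ZMod (p * q)) :=
  (Finset.range ((p - 1) * (q - 1) / 4) ×ˢ Finset.range 2).image
    (fun ti => (g : ZMod (p * q)) ^ (2 * ti.1) * (x : ZMod (p * q)) ^ ti.2)

/-- `D₁ = g · D₀`. -/
def DHD1 (p q g x : ℕ) : Finset (ZMod (p * q)) :=
  (DHD0 p q g x).image (fun d => (g : ZMod (p * q)) * d)

/-- `P = {p, 2p, …, (q-1)p}` as a subset of `ZMod (p*q)`. -/
def DHP (p q : ℕ) : Finset (ZMod (p * q)) :=
  (Finset.Icc 1 (q - 1)).image (fun k => ((k * p : ℕ) : ZMod (p * q)))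

/-- `Q = {q, 2q, …, (p-1)q}` as a subset of `ZMod (p*q)`. -/
def DHQ (p q : ℕ) : Finset (ZMod (p * q)) :=
  (Finset.Icc 1 (p - 1)).image (fun k => ((k * q : ℕ) : ZMod (p * q)))

/-- First Ding–Helleseth sequence: `s_i = 1` iff `i mod N ∈ D₁ ∪ P`. -/
def DHs1 (p q g x : ℕ) (i : ℕ) : ℕ :=
  if (i : ZMod (p * q)) ∈ DHD1 p q g x ∪ DHP p q then 1 else 0

/-- Second Ding–Helleseth sequence: `s_i = 1` iff `i mod N ∈ D₁ ∪ Q`. -/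
def DHs2 (p q g x : ℕ) (i : ℕ) : ℕ :=
  if (i : ZMod (p * q)) ∈ DHD1 p q g x ∪ DHQ p q then 1 else 0

/-- Circulant matrix of the first sequence: `a_{i,j} = s_{(i-j) mod N}`. -/
noncomputable def DHA1 (p q g x : ℕ) : Matrix (Fin (p * q)) (Fin (p * q)) ℂ :=
  fun i j => (DHs1 p q g x ((((i : ℕ) : ZMod (p * q)) - ((j : ℕ) : ZMod (p * q))).val) : ℂ)

/-- Circulant matrix of the second sequence: `a_{i,j} = s_{(i-j) mod N}`. -/
noncomputable def DHA2 (p q g x : ℕ) : Matrix (Fin (p * q)) (Fin (p * q)) ℂ :=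
  fun i j => (DHs2 p q g x ((((i : ℕ) : ZMod (p * q)) - ((j : ℕ) : ZMod (p * q))).val) : ℂ)

/-- `S(z) = Σ_{i=0}^{N-1} s_i z^i` for the first sequence. -/
noncomputable def DHSval1 (p q g x : ℕ) (z : ℂ) : ℂ :=
  ∑ i ∈ Finset.range (p * q), (DHs1 p q g x i : ℂ) * z ^ i

/-- `S(z) = Σ_{i=0}^{N-1} s_i z^i` for the second sequence. -/
noncomputable def DHSval2 (p q g x : ℕ) (z : ℂ) : ℂ :=
  ∑ i ∈ Finset.range (p * q), (DHs2 p q g x i : ℂ) * z ^ i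

/-- `S(2) = Σ_{i=0}^{N-1} s_i 2^i` for the first sequence, as a natural number. -/
def DHS2num1 (p q g x : ℕ) : ℕ := ∑ i ∈ Finset.range (p * q), DHs1 p q g x i * 2 ^ i

/-- `S(2) = Σ_{i=0}^{N-1} s_i 2^i` for the second sequence, as a natural number. -/
def DHS2num2 (p q g x : ℕ) : ℕ := ∑ i ∈ Finset.range (p * q), DHs2 p q g x i * 2 ^ i

/-- Nonzero quadratic residues modulo `q`. -/
def DHQR (q : ℕ) [NeZero q] : Finset (ZMod q) :=
  Finset.univ.filter (fun a => a ≠ 0 ∧ ∃ b : ZMod q, b * b = a)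

/-- Quadratic nonresidues modulo `q`. -/
def DHQNR (q : ℕ) [NeZero q] : Finset (ZMod q) :=
  Finset.univ.filter (fun a => a ≠ 0 ∧ ¬∃ b : ZMod q, b * b = a)

/-! ### Auxiliary machinery -/

section Aux

variable (p q : ℕ)

/-- reduction mod `p`. -/
def phiP : ZMod (p * q) →+* ZMod p := ZMod.castHom (dvd_mul_right p q) _

/-- reduction mod `q`. -/
def phiQ : ZMod (p * q) →+* ZMod q := ZMod.castHom (dvd_mul_left q p) _

lemma phiP_natCast (k : ℕ) : phiP p q (k : ZMod (p * q)) = (k : ZMod p) := map_natCast _ k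

lemma phiQ_natCast (k : ℕ) : phiQ p q (k : ZMod (p * q)) = (k : ZMod q) := map_natCast _ k

variable {p q}

lemma crtInj (hp : p.Prime) (hq : q.Prime) (hne : p ≠ q) {u v : ZMod (p * q)}
    (h1 : phiP p q u = phiP p q v) (h2 : phiQ p q u = phiQ p q v) : u = v := by
  haveI : NeZero p := ⟨hp.ne_zero⟩
  haveI : NeZero q := ⟨hq.ne_zero⟩
  haveI : NeZero (p * q) := ⟨Nat.mul_ne_zero hp.ne_zero hq.ne_zero⟩
  have h3 : phiP p q (u - v) = 0 := by rw [map_sub, h1, sub_self]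
  have h4 : phiQ p q (u - v) = 0 := by rw [map_sub, h2, sub_self]
  set w := u - v with hw
  have hwv : ((w.val : ℕ) : ZMod (p * q)) = w := ZMod.natCast_zmod_val w
  rw [← hwv, phiP_natCast] at h3
  rw [← hwv, phiQ_natCast] at h4
  have hdp : p ∣ w.val := (ZMod.natCast_eq_zero_iff _ _).mp h3
  have hdq : q ∣ w.val := (ZMod.natCast_eq_zero_iff _ _).mp h4
  have hcop : Nat.Coprime p q := (Nat.coprime_primes hp hq).mpr hne
  have hdpq : p * q ∣ w.val := hcop.mul_dvd_of_dvd_of_dvd hdp hdq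
  have hlt : w.val < p * q := ZMod.val_lt w
  have : w.val = 0 := Nat.eq_zero_of_dvd_of_lt hdpq hlt
  have hw0 : w = 0 := by rw [← hwv, this, Nat.cast_zero]
  have := sub_eq_zero.mp (hw ▸ hw0)
  exact this

lemma phiP_val {u : ZMod (p * q)} [NeZero (p * q)] : phiP p q u = ((u.val : ℕ) : ZMod p) := by
  conv_lhs => rw [← ZMod.natCast_zmod_val u]
  rw [phiP_natCast]

lemma phiQ_val {u : ZMod (p * q)} [NeZero (p * q)] : phiQ p q u = ((u.val : ℕ) : ZMod q) := by
  conv_lhs => rw [← ZMod.natCast_zmod_val u]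
  rw [phiQ_natCast]

lemma isUnit_iff_phi (hp : p.Prime) (hq : q.Prime) (hne : p ≠ q) {u : ZMod (p * q)} :
    IsUnit u ↔ phiP p q u ≠ 0 ∧ phiQ p q u ≠ 0 := by
  haveI : NeZero p := ⟨hp.ne_zero⟩
  haveI : NeZero q := ⟨hq.ne_zero⟩
  haveI : NeZero (p * q) := ⟨Nat.mul_ne_zero hp.ne_zero hq.ne_zero⟩
  haveI : Fact p.Prime := ⟨hp⟩
  haveI : Fact q.Prime := ⟨hq⟩
  constructor
  · intro hu
    refine ⟨?_, ?_⟩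
    · intro h0
      have := hu.map (phiP p q)
      rw [h0] at this
      exact not_isUnit_zero this
    · intro h0
      have := hu.map (phiQ p q)
      rw [h0] at this
      exact not_isUnit_zero this
  · rintro ⟨h1, h2⟩
    rw [phiP_val] at h1
    rw [phiQ_val] at h2
    have hdp : ¬ p ∣ u.val := fun h => h1 ((ZMod.natCast_eq_zero_iff _ _).mpr h)
    have hdq : ¬ q ∣ u.val := fun h => h2 ((ZMod.natCast_eq_zero_iff _ _).mpr h)
    have hcop : Nat.Coprime (u.val) (p * q) :=
      Nat.Coprime.mul_right ((hp.coprime_iff_not_dvd.mpr hdp).symm) ((hq.coprime_iff_not_dvd.mpr hdq).symm)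
    have := (ZMod.isUnit_iff_coprime u.val (p * q)).mpr hcop
    rwa [ZMod.natCast_zmod_val u] at this

/-- a primitive root is nonzero -/
lemma gen_ne_zero {r c : ℕ} (hr : r.Prime) (hg : orderOf (c : ZMod r) = r - 1) :
    (c : ZMod r) ≠ 0 := by
  haveI : Fact r.Prime := ⟨hr⟩
  intro h
  have h1 : (c : ZMod r) ^ (r - 1) = 1 := hg ▸ pow_orderOf_eq_one _
  rw [h, zero_pow (by have := hr.two_le; omega)] at h1
  exact zero_ne_one h1

/-- every nonzero element is a power of a primitive root -/
lemma gen_pow_surj {r c : ℕ} (hr : r.Prime) (hg : orderOf (c : ZMod r) = r - 1)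
    {w : ZMod r} (hw : w ≠ 0) : ∃ k : ℕ, (c : ZMod r) ^ k = w := by
  haveI : Fact r.Prime := ⟨hr⟩
  have hc0 : (c : ZMod r) ≠ 0 := gen_ne_zero hr hg
  set U : (ZMod r)ˣ := (isUnit_iff_ne_zero.mpr hc0).unit with hU
  have hUval : (U : ZMod r) = (c : ZMod r) := IsUnit.unit_spec _
  have hordU : orderOf U = r - 1 := by
    rw [← orderOf_units, hUval, hg]
  set W : (ZMod r)ˣ := (isUnit_iff_ne_zero.mpr hw).unit with hW
  have hWval : (W : ZMod r) = w := IsUnit.unit_spec _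
  have hcard : Nat.card (ZMod r)ˣ = r - 1 := by
    rw [Nat.card_eq_fintype_card, ZMod.card_units_eq_totient, Nat.totient_prime hr]
  have htop : Subgroup.zpowers U = ⊤ := by
    apply Subgroup.eq_top_of_card_eq
    rw [Nat.card_zpowers, hordU, hcard]
  have hmem : W ∈ Subgroup.zpowers U := htop ▸ Subgroup.mem_top W
  have : W ∈ Submonoid.powers U := mem_powers_iff_mem_zpowers.mpr hmem
  obtain ⟨k, hk⟩ := (Submonoid.mem_powers_iff _ _).mp this
  refine ⟨k, ?_⟩
  have := congrArg (Units.val) hk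
  rw [Units.val_pow_eq_pow_val, hUval, hWval] at this
  exact this

lemma pow_eq_pow_of_modEq' {r c : ℕ} (hr : r.Prime) (hg : orderOf (c : ZMod r) = r - 1)
    {m n : ℕ} (h : m ≡ n [MOD r - 1]) : (c : ZMod r) ^ m = (c : ZMod r) ^ n := by
  haveI : Fact r.Prime := ⟨hr⟩
  have hc0 : (c : ZMod r) ≠ 0 := gen_ne_zero hr hg
  set U : (ZMod r)ˣ := (isUnit_iff_ne_zero.mpr hc0).unit with hU
  have hUval : (U : ZMod r) = (c : ZMod r) := IsUnit.unit_spec _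
  have hordU : orderOf U = r - 1 := by rw [← orderOf_units, hUval, hg]
  have : U ^ m = U ^ n := pow_eq_pow_iff_modEq.mpr (hordU ▸ h)
  have := congrArg (Units.val) this
  rwa [Units.val_pow_eq_pow_val, Units.val_pow_eq_pow_val, hUval] at this

lemma gen_not_square {r c : ℕ} (hr : r.Prime) (hro : Odd r)
    (hg : orderOf (c : ZMod r) = r - 1) : ¬ IsSquare (c : ZMod r) := by
  haveI : Fact r.Prime := ⟨hr⟩
  have hr3 : 3 ≤ r := by
    obtain ⟨k, hk⟩ := hro
    have := hr.two_le
    omega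
  rintro ⟨b, hb⟩
  have hb0 : b ≠ 0 := by
    intro h; rw [h, mul_zero] at hb; exact gen_ne_zero hr hg hb
  have hpow : (c : ZMod r) ^ ((r - 1) / 2) = 1 := by
    rw [hb]
    have : b * b = b ^ 2 := by ring
    rw [this, ← pow_mul]
    have h2 : 2 * ((r - 1) / 2) = r - 1 := by
      obtain ⟨k, hk⟩ := hro
      omega
    rw [h2]
    exact ZMod.pow_card_sub_one_eq_one hb0
  have hdvd : r - 1 ∣ (r - 1) / 2 := by
    have h := orderOf_dvd_iff_pow_eq_one.mpr hpow
    rwa [hg] at h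
  have h1 : (r - 1) / 2 < r - 1 := Nat.div_lt_self (by omega) (by omega)
  have h2 : 0 < (r - 1) / 2 := by omega
  have := Nat.le_of_dvd h2 hdvd
  omega

end Aux

/-! ### Membership characterizations -/

section Char

variable {p q g x : ℕ}
variable (hp : Nat.Prime p) (hq : Nat.Prime q) (hpo : Odd p) (hqo : Odd q) (hpq : p < q)
variable (hgcd : Nat.gcd (p - 1) (q - 1) = 2)
variable (hgp : orderOf (g : ZMod p) = p - 1) (hgq : orderOf (g : ZMod q) = q - 1)
variable (hxp : (x : ZMod p) = (g : ZMod p)) (hxq : (x : ZMod q) = 1)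

include hp hq hpq hgp hgq hxp hxq

lemma g_unit : IsUnit ((g : ℕ) : ZMod (p * q)) := by
  rw [isUnit_iff_phi hp hq hpq.ne, phiP_natCast, phiQ_natCast]
  exact ⟨gen_ne_zero hp hgp, gen_ne_zero hq hgq⟩

lemma x_unit : IsUnit ((x : ℕ) : ZMod (p * q)) := by
  haveI : Fact q.Prime := ⟨hq⟩
  rw [isUnit_iff_phi hp hq hpq.ne, phiP_natCast, phiQ_natCast, hxp, hxq]
  exact ⟨gen_ne_zero hp hgp, one_ne_zero⟩

include hqo hgcd hpo in
lemma memD0_iff {u : ZMod (p * q)} :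
    u ∈ DHD0 p q g x ↔ IsUnit u ∧ IsSquare (phiQ p q u) := by
  haveI : Fact q.Prime := ⟨hq⟩
  constructor
  · intro hu
    rw [DHD0, Finset.mem_image] at hu
    obtain ⟨⟨t, e⟩, hmem, rfl⟩ := hu
    constructor
    · exact ((g_unit hp hq hpq hgp hgq hxp hxq).pow _).mul ((x_unit hp hq hpq hgp hgq hxp hxq).pow _)
    · rw [map_mul, map_pow, map_pow, phiQ_natCast, phiQ_natCast, hxq, one_pow, mul_one]
      exact ⟨(g : ZMod q) ^ t, by rw [← pow_add, two_mul]⟩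
  · rintro ⟨hu, hsq⟩
    obtain ⟨hup, huq⟩ := (isUnit_iff_phi hp hq hpq.ne).mp hu
    obtain ⟨i, hi⟩ := gen_pow_surj hp hgp hup
    obtain ⟨j, hj⟩ := gen_pow_surj hq hgq huq
    -- j is even
    have hχg : quadraticChar (ZMod q) ((g : ZMod q)) = -1 :=
      quadraticChar_neg_one_iff_not_isSquare.mpr (gen_not_square hq hqo hgq)
    have hχu : quadraticChar (ZMod q) (phiQ p q u) = 1 :=
      (quadraticChar_one_iff_isSquare huq).mpr hsq
    have hj2 : Even j := by
      have : quadraticChar (ZMod q) ((g : ZMod q) ^ j) = 1 := by rw [hj]; exact hχu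
      rw [map_pow, hχg] at this
      exact (neg_one_pow_eq_one_iff_even (by norm_num : (-1 : ℤ) ≠ 1)).mp this
    -- set up CRT for exponents
    obtain ⟨a, ha⟩ : ∃ a, p - 1 = 2 * a := by obtain ⟨k, hk⟩ := hpo; exact ⟨k, by omega⟩
    obtain ⟨b, hb⟩ : ∃ b, q - 1 = 2 * b := by obtain ⟨k, hk⟩ := hqo; exact ⟨k, by omega⟩
    have ha1 : 1 ≤ a := by have := hp.two_le; omega
    have hb1 : 1 ≤ b := by have := hq.two_le; omega
    set ε := i % 2 with hε
    have hεle : ε ≤ i := Nat.mod_le i 2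
    have hiε : Even (i - ε) := ⟨i / 2, by omega⟩
    have hmodeq : (i - ε) ≡ j [MOD Nat.gcd (p - 1) (q - 1)] := by
      rw [hgcd]
      unfold Nat.ModEq
      rw [Nat.even_iff.mp hiε, Nat.even_iff.mp hj2]
    obtain ⟨s, hs1, hs2⟩ := Nat.chineseRemainder' hmodeq
    have hse : Even s := by
      have h2d : (2 : ℕ) ∣ q - 1 := ⟨b, hb⟩
      have := (Nat.ModEq.of_dvd h2d hs2)
      rw [Nat.even_iff, Nat.ModEq] at *
      omega
    set t := (s / 2) % (a * b) with ht
    have htlt : t < a * b := Nat.mod_lt _ (by positivity)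
    have hE : (p - 1) * (q - 1) / 4 = a * b := by
      rw [ha, hb]
      have h4 : 2 * a * (2 * b) = 4 * (a * b) := by ring
      rw [h4, Nat.mul_div_cancel_left _ (by norm_num : (0:ℕ) < 4)]
    have h2t : 2 * t ≡ s [MOD 2 * (a * b)] := by
      have h1 : (s / 2) % (a * b) ≡ s / 2 [MOD a * b] := Nat.mod_modEq _ _
      have h2 := h1.mul_left' (c := 2)
      have hs : 2 * (s / 2) = s := by
        obtain ⟨k, hk⟩ := hse; omega
      rw [hs] at h2
      exact h2
    have h2tp : 2 * t ≡ s [MOD p - 1] := h2t.of_dvd (by rw [ha]; exact ⟨b, by ring⟩)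
    have h2tq : 2 * t ≡ s [MOD q - 1] := h2t.of_dvd (by rw [hb]; exact ⟨a, by ring⟩)
    rw [DHD0, Finset.mem_image]
    refine ⟨(t, ε), ?_, ?_⟩
    · rw [Finset.mem_product, Finset.mem_range, Finset.mem_range]
      exact ⟨hE ▸ htlt, Nat.mod_lt _ (by norm_num)⟩
    · apply crtInj hp hq hpq.ne
      · rw [map_mul, map_pow, map_pow, phiP_natCast, phiP_natCast, hxp, ← pow_add, ← hi]
        apply pow_eq_pow_of_modEq' hp hgp
        calc 2 * t + ε ≡ s + ε [MOD p - 1] := h2tp.add_right ε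
          _ ≡ (i - ε) + ε [MOD p - 1] := hs1.add_right ε
          _ = i := by omega
      · rw [map_mul, map_pow, map_pow, phiQ_natCast, phiQ_natCast, hxq, one_pow, mul_one, ← hj]
        exact pow_eq_pow_of_modEq' hq hgq (h2tq.trans hs2)

include hqo hgcd hpo in
lemma memD1_iff {u : ZMod (p * q)} :
    u ∈ DHD1 p q g x ↔ IsUnit u ∧ ¬ IsSquare (phiQ p q u) := by
  haveI : Fact q.Prime := ⟨hq⟩
  have hgu := g_unit hp hq hpq hgp hgq hxp hxq
  have hχg : quadraticChar (ZMod q) ((g : ZMod q)) = -1 :=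
    quadraticChar_neg_one_iff_not_isSquare.mpr (gen_not_square hq hqo hgq)
  constructor
  · intro hu
    rw [DHD1, Finset.mem_image] at hu
    obtain ⟨d, hd, rfl⟩ := hu
    obtain ⟨hdu, hdsq⟩ := (memD0_iff hp hq hpo hqo hpq hgcd hgp hgq hxp hxq).mp hd
    have hduq : phiQ p q d ≠ 0 := ((isUnit_iff_phi hp hq hpq.ne).mp hdu).2
    refine ⟨hgu.mul hdu, ?_⟩
    rw [map_mul, phiQ_natCast]
    apply (quadraticChar_neg_one_iff_not_isSquare).mp
    rw [map_mul, hχg, (quadraticChar_one_iff_isSquare hduq).mpr hdsq]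
    ring
  · rintro ⟨hu, hnsq⟩
    have hguq : phiQ p q ((g : ℕ) : ZMod (p * q)) ≠ 0 := by
      rw [phiQ_natCast]; exact gen_ne_zero hq hgq
    obtain ⟨U, hUg⟩ := id hgu
    set d : ZMod (p * q) := ↑(U⁻¹) * u with hd
    have hgd : ((g : ℕ) : ZMod (p * q)) * d = u := by
      rw [hd, ← hUg]
      exact Units.mul_inv_cancel_left _ _
    have hdu : IsUnit d := ((U⁻¹).isUnit).mul hu
    have hdq : phiQ p q d ≠ 0 := ((isUnit_iff_phi hp hq hpq.ne).mp hdu).2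
    have huq : phiQ p q u ≠ 0 := ((isUnit_iff_phi hp hq hpq.ne).mp hu).2
    have hχu : quadraticChar (ZMod q) (phiQ p q u) = -1 :=
      quadraticChar_neg_one_iff_not_isSquare.mpr hnsq
    have hχd : quadraticChar (ZMod q) (phiQ p q d) = 1 := by
      have h1 : quadraticChar (ZMod q) (phiQ p q ((g:ℕ) : ZMod (p*q)) * phiQ p q d) = -1 := by
        rw [← map_mul, hgd]; exact hχu
      rw [map_mul, phiQ_natCast, hχg] at h1
      linarith
    have hdsq : IsSquare (phiQ p q d) := (quadraticChar_one_iff_isSquare hdq).mp hχd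
    rw [DHD1, Finset.mem_image]
    exact ⟨d, (memD0_iff hp hq hpo hqo hpq hgcd hgp hgq hxp hxq).mpr ⟨hdu, hdsq⟩, hgd⟩

end Char

section PQChar

variable {p q : ℕ} (hp : Nat.Prime p) (hq : Nat.Prime q) (hpq : p < q)

include hp hq hpq in
lemma memQ_iff {v : ZMod (p * q)} :
    v ∈ DHQ p q ↔ phiP p q v ≠ 0 ∧ phiQ p q v = 0 := by
  haveI : NeZero p := ⟨hp.ne_zero⟩
  haveI : NeZero q := ⟨hq.ne_zero⟩
  haveI : NeZero (p * q) := ⟨Nat.mul_ne_zero hp.ne_zero hq.ne_zero⟩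
  haveI : Fact p.Prime := ⟨hp⟩
  have hpq' : ¬ p ∣ q := by
    intro h
    exact hpq.ne ((Nat.prime_dvd_prime_iff_eq hp hq).mp h)
  constructor
  · intro hv
    rw [DHQ, Finset.mem_image] at hv
    obtain ⟨k, hk, rfl⟩ := hv
    rw [Finset.mem_Icc] at hk
    constructor
    · rw [phiP_natCast, Nat.cast_mul]
      apply mul_ne_zero
      · intro h
        have := (ZMod.natCast_eq_zero_iff k p).mp h
        have := Nat.le_of_dvd (by omega) this
        have := hp.two_le
        omega
      · intro h
        exact hpq' ((ZMod.natCast_eq_zero_iff q p).mp h)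
    · rw [phiQ_natCast, Nat.cast_mul, ZMod.natCast_self, mul_zero]
  · rintro ⟨h1, h2⟩
    rw [phiQ_val] at h2
    have hdvd : q ∣ v.val := (ZMod.natCast_eq_zero_iff _ _).mp h2
    set k := v.val / q with hk
    have hkq : k * q = v.val := Nat.div_mul_cancel hdvd
    have hvlt : v.val < p * q := ZMod.val_lt v
    have hklt : k < p := by
      by_contra h
      push_neg at h
      have h2 : p * q ≤ k * q := Nat.mul_le_mul_right q h
      rw [hkq] at h2
      exact absurd hvlt (not_lt.mpr h2)
    have hk1 : 1 ≤ k := by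
      by_contra h
      push_neg at h
      have hk0 : k = 0 := Nat.lt_one_iff.mp h
      rw [hk0, zero_mul] at hkq
      have hv0 : v = 0 := by
        rw [← ZMod.natCast_zmod_val v, ← hkq, Nat.cast_zero]
      rw [hv0, map_zero] at h1
      exact h1 rfl
    rw [DHQ, Finset.mem_image]
    refine ⟨k, Finset.mem_Icc.mpr ⟨hk1, Nat.le_sub_one_of_lt hklt⟩, ?_⟩
    rw [hkq, ZMod.natCast_zmod_val]

include hp hq hpq in
lemma memP_iff {v : ZMod (p * q)} :
    v ∈ DHP p q ↔ phiP p q v = 0 ∧ phiQ p q v ≠ 0 := by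
  haveI : NeZero p := ⟨hp.ne_zero⟩
  haveI : NeZero q := ⟨hq.ne_zero⟩
  haveI : NeZero (p * q) := ⟨Nat.mul_ne_zero hp.ne_zero hq.ne_zero⟩
  haveI : Fact q.Prime := ⟨hq⟩
  have hqp' : ¬ q ∣ p := by
    intro h
    exact hpq.ne (((Nat.prime_dvd_prime_iff_eq hq hp).mp h).symm)
  constructor
  · intro hv
    rw [DHP, Finset.mem_image] at hv
    obtain ⟨k, hk, rfl⟩ := hv
    rw [Finset.mem_Icc] at hk
    constructor
    · rw [phiP_natCast, Nat.cast_mul, ZMod.natCast_self, mul_zero]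
    · rw [phiQ_natCast, Nat.cast_mul]
      apply mul_ne_zero
      · intro h
        have := (ZMod.natCast_eq_zero_iff k q).mp h
        have := Nat.le_of_dvd (by omega) this
        have := hq.two_le
        omega
      · intro h
        exact hqp' ((ZMod.natCast_eq_zero_iff p q).mp h)
  · rintro ⟨h1, h2⟩
    rw [phiP_val] at h1
    have hdvd : p ∣ v.val := (ZMod.natCast_eq_zero_iff _ _).mp h1
    set k := v.val / p with hk
    have hkq : k * p = v.val := Nat.div_mul_cancel hdvd
    have hvlt : v.val < p * q := ZMod.val_lt v
    have hklt : k < q := by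
      by_contra h
      push_neg at h
      have h2 : q * p ≤ k * p := Nat.mul_le_mul_right p h
      rw [hkq] at h2
      have h3 : v.val < q * p := by rw [mul_comm q p]; exact hvlt
      exact absurd h3 (not_lt.mpr h2)
    have hk1 : 1 ≤ k := by
      by_contra h
      push_neg at h
      have hk0 : k = 0 := Nat.lt_one_iff.mp h
      rw [hk0, zero_mul] at hkq
      have hv0 : v = 0 := by
        rw [← ZMod.natCast_zmod_val v, ← hkq, Nat.cast_zero]
      rw [hv0, map_zero] at h2
      exact h2 rfl
    rw [DHP, Finset.mem_image]
    refine ⟨k, Finset.mem_Icc.mpr ⟨hk1, Nat.le_sub_one_of_lt hklt⟩, ?_⟩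
    rw [hkq, ZMod.natCast_zmod_val]

end PQChar

/-! ### Root of unity sums -/

section Sums

lemma DHxi_prim (N : ℕ) (hN : N ≠ 0) : IsPrimitiveRoot (DHxi N) N := by
  unfold DHxi
  exact Complex.isPrimitiveRoot_exp N hN

lemma xi_pow_mod (N : ℕ) (hN : N ≠ 0) (m : ℕ) : DHxi N ^ m = DHxi N ^ (m % N) := by
  conv_lhs => rw [← Nat.div_add_mod m N]
  rw [pow_add, pow_mul, (DHxi_prim N hN).pow_eq_one, one_pow, one_mul]

lemma sum_univ_xi (N : ℕ) [NeZero N] (hN : 1 < N) : ∑ v : ZMod N, DHxi N ^ v.val = 0 := by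
  have h : ∑ v : ZMod N, DHxi N ^ v.val = ∑ i ∈ Finset.range N, DHxi N ^ i := by
    apply Finset.sum_nbij' (fun v : ZMod N => v.val) (fun i : ℕ => (i : ZMod N))
    · intro a _; exact Finset.mem_range.mpr (ZMod.val_lt a)
    · intro a _; exact Finset.mem_univ _
    · intro a _; exact ZMod.natCast_zmod_val a
    · intro a ha; exact ZMod.val_cast_of_lt (Finset.mem_range.mp ha)
    · intro a _; rfl
  rw [h]
  exact (DHxi_prim N (by omega)).geom_sum_eq_zero hN

lemma sum_Icc_prim {ζ : ℂ} {r : ℕ} (hprim : IsPrimitiveRoot ζ r) (hr : 1 < r) :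
    ∑ k ∈ Finset.Icc 1 (r - 1), ζ ^ k = -1 := by
  have h0 := hprim.geom_sum_eq_zero hr
  have hins : Finset.range r = insert 0 (Finset.Icc 1 (r - 1)) := by
    ext m
    simp only [Finset.mem_range, Finset.mem_insert, Finset.mem_Icc]
    omega
  rw [hins, Finset.sum_insert (by simp), pow_zero] at h0
  linear_combination h0

lemma sum_DHQ {p q : ℕ} (hp : p.Prime) (hq : q.Prime) :
    ∑ v ∈ DHQ p q, DHxi (p * q) ^ v.val = -1 := by
  have hN : (p * q) ≠ 0 := Nat.mul_ne_zero hp.ne_zero hq.ne_zero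
  have hval : ∀ k ∈ Finset.Icc 1 (p - 1), (((k * q : ℕ) : ZMod (p * q))).val = k * q := by
    intro k hk
    rw [Finset.mem_Icc] at hk
    apply ZMod.val_cast_of_lt
    calc k * q ≤ (p - 1) * q := Nat.mul_le_mul_right q hk.2
      _ < p * q := (Nat.mul_lt_mul_right hq.pos).mpr (by have := hp.two_le; omega)
  have hinj : ∀ k1 ∈ Finset.Icc 1 (p-1), ∀ k2 ∈ Finset.Icc 1 (p-1),
      ((k1 * q : ℕ) : ZMod (p * q)) = ((k2 * q : ℕ) : ZMod (p * q)) → k1 = k2 := by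
    intro k1 h1 k2 h2 heq
    have := congrArg ZMod.val heq
    rw [hval k1 h1, hval k2 h2] at this
    exact Nat.eq_of_mul_eq_mul_right hq.pos this
  rw [DHQ, Finset.sum_image hinj]
  have hζ : IsPrimitiveRoot (DHxi (p * q) ^ q) p :=
    (DHxi_prim _ hN).pow (Nat.pos_of_ne_zero hN) (mul_comm p q)
  calc ∑ k ∈ Finset.Icc 1 (p - 1), DHxi (p * q) ^ ((((k * q : ℕ)) : ZMod (p * q)).val)
      = ∑ k ∈ Finset.Icc 1 (p - 1), (DHxi (p * q) ^ q) ^ k := by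
        apply Finset.sum_congr rfl
        intro k hk
        rw [hval k hk, ← pow_mul, mul_comm q k]
    _ = -1 := sum_Icc_prim hζ (by have := hp.two_le; omega)

lemma sum_DHP {p q : ℕ} (hp : p.Prime) (hq : q.Prime) :
    ∑ v ∈ DHP p q, DHxi (p * q) ^ v.val = -1 := by
  have hN : (p * q) ≠ 0 := Nat.mul_ne_zero hp.ne_zero hq.ne_zero
  have hval : ∀ k ∈ Finset.Icc 1 (q - 1), (((k * p : ℕ) : ZMod (p * q))).val = k * p := by
    intro k hk
    rw [Finset.mem_Icc] at hk
    apply ZMod.val_cast_of_lt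
    calc k * p ≤ (q - 1) * p := Nat.mul_le_mul_right p hk.2
      _ < q * p := (Nat.mul_lt_mul_right hp.pos).mpr (by have := hq.two_le; omega)
      _ = p * q := mul_comm q p
  have hinj : ∀ k1 ∈ Finset.Icc 1 (q-1), ∀ k2 ∈ Finset.Icc 1 (q-1),
      ((k1 * p : ℕ) : ZMod (p * q)) = ((k2 * p : ℕ) : ZMod (p * q)) → k1 = k2 := by
    intro k1 h1 k2 h2 heq
    have := congrArg ZMod.val heq
    rw [hval k1 h1, hval k2 h2] at this
    exact Nat.eq_of_mul_eq_mul_right hp.pos this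
  rw [DHP, Finset.sum_image hinj]
  have hζ : IsPrimitiveRoot (DHxi (p * q) ^ p) q :=
    (DHxi_prim _ hN).pow (Nat.pos_of_ne_zero hN) rfl
  calc ∑ k ∈ Finset.Icc 1 (q - 1), DHxi (p * q) ^ ((((k * p : ℕ)) : ZMod (p * q)).val)
      = ∑ k ∈ Finset.Icc 1 (q - 1), (DHxi (p * q) ^ p) ^ k := by
        apply Finset.sum_congr rfl
        intro k hk
        rw [hval k hk, ← pow_mul, mul_comm p k]
    _ = -1 := sum_Icc_prim hζ (by have := hq.two_le; omega)

end Sums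

/-! ### Partition and eta sum -/

section Main

variable {p q g x : ℕ}
variable (hp : Nat.Prime p) (hq : Nat.Prime q) (hpo : Odd p) (hqo : Odd q) (hpq : p < q)
variable (hgcd : Nat.gcd (p - 1) (q - 1) = 2)
variable (hgp : orderOf (g : ZMod p) = p - 1) (hgq : orderOf (g : ZMod q) = q - 1)
variable (hxp : (x : ZMod p) = (g : ZMod p)) (hxq : (x : ZMod q) = 1)

include hp hq hpo hqo hpq hgcd hgp hgq hxp hxq

lemma eta_sum_eq_one :
    (∑ v ∈ DHD0 p q g x, DHxi (p * q) ^ v.val) +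
      (∑ v ∈ DHD1 p q g x, DHxi (p * q) ^ v.val) = 1 := by
  haveI : NeZero (p * q) := ⟨Nat.mul_ne_zero hp.ne_zero hq.ne_zero⟩
  haveI : Fact q.Prime := ⟨hq⟩
  have hN1 : 1 < p * q := lt_of_lt_of_le hp.one_lt (Nat.le_mul_of_pos_right p hq.pos)
  have huniv : (Finset.univ : Finset (ZMod (p * q)))
      = (({0} ∪ DHP p q) ∪ DHQ p q) ∪ (DHD0 p q g x ∪ DHD1 p q g x) := by
    ext v
    simp only [Finset.mem_univ, true_iff, Finset.mem_union, Finset.mem_singleton]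
    by_cases h1 : phiP p q v = 0 <;> by_cases h2 : phiQ p q v = 0
    · exact Or.inl (Or.inl (Or.inl (crtInj hp hq hpq.ne (by rw [h1, map_zero]) (by rw [h2, map_zero]))))
    · exact Or.inl (Or.inl (Or.inr ((memP_iff hp hq hpq).mpr ⟨h1, h2⟩)))
    · exact Or.inl (Or.inr ((memQ_iff hp hq hpq).mpr ⟨h1, h2⟩))
    · right
      have hu : IsUnit v := (isUnit_iff_phi hp hq hpq.ne).mpr ⟨h1, h2⟩
      by_cases hsq : IsSquare (phiQ p q v)
      · exact Or.inl ((memD0_iff hp hq hpo hqo hpq hgcd hgp hgq hxp hxq).mpr ⟨hu, hsq⟩)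
      · exact Or.inr ((memD1_iff hp hq hpo hqo hpq hgcd hgp hgq hxp hxq).mpr ⟨hu, hsq⟩)
  have d1 : Disjoint ({0} : Finset (ZMod (p * q))) (DHP p q) := by
    rw [Finset.disjoint_left]
    intro v hv hvP
    rw [Finset.mem_singleton] at hv
    obtain ⟨_, h2⟩ := (memP_iff hp hq hpq).mp hvP
    rw [hv, map_zero] at h2
    exact h2 rfl
  have d2 : Disjoint (({0} : Finset (ZMod (p * q))) ∪ DHP p q) (DHQ p q) := by
    rw [Finset.disjoint_left]
    intro v hv hvQ
    obtain ⟨h1, _⟩ := (memQ_iff hp hq hpq).mp hvQ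
    rcases Finset.mem_union.mp hv with h | h
    · rw [Finset.mem_singleton] at h
      rw [h, map_zero] at h1
      exact h1 rfl
    · exact h1 ((memP_iff hp hq hpq).mp h).1
  have d3 : Disjoint ((({0} : Finset (ZMod (p * q))) ∪ DHP p q) ∪ DHQ p q)
      (DHD0 p q g x ∪ DHD1 p q g x) := by
    rw [Finset.disjoint_left]
    intro v hv hvD
    have hu : IsUnit v := by
      rcases Finset.mem_union.mp hvD with h | h
      · exact ((memD0_iff hp hq hpo hqo hpq hgcd hgp hgq hxp hxq).mp h).1
      · exact ((memD1_iff hp hq hpo hqo hpq hgcd hgp hgq hxp hxq).mp h).1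
    obtain ⟨h1, h2⟩ := (isUnit_iff_phi hp hq hpq.ne).mp hu
    rcases Finset.mem_union.mp hv with h | h
    · rcases Finset.mem_union.mp h with h' | h'
      · rw [Finset.mem_singleton] at h'
        rw [h', map_zero] at h1
        exact h1 rfl
      · exact h1 ((memP_iff hp hq hpq).mp h').1
    · exact h2 ((memQ_iff hp hq hpq).mp h).2
  have d4 : Disjoint (DHD0 p q g x) (DHD1 p q g x) := by
    rw [Finset.disjoint_left]
    intro v hv0 hv1
    exact ((memD1_iff hp hq hpo hqo hpq hgcd hgp hgq hxp hxq).mp hv1).2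
      ((memD0_iff hp hq hpo hqo hpq hgcd hgp hgq hxp hxq).mp hv0).2
  have h0 := sum_univ_xi (p * q) hN1
  rw [huniv, Finset.sum_union d3, Finset.sum_union d2, Finset.sum_union d1,
    Finset.sum_union d4, Finset.sum_singleton, sum_DHP hp hq, sum_DHQ hp hq,
    ZMod.val_zero, pow_zero] at h0
  linear_combination h0

lemma disjoint_D0_Q : Disjoint (DHD0 p q g x) (DHQ p q) := by
  rw [Finset.disjoint_left]
  intro v hv0 hvQ
  have hu := ((memD0_iff hp hq hpo hqo hpq hgcd hgp hgq hxp hxq).mp hv0).1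
  exact ((isUnit_iff_phi hp hq hpq.ne).mp hu).2 ((memQ_iff hp hq hpq).mp hvQ).2

lemma disjoint_D1_Q : Disjoint (DHD1 p q g x) (DHQ p q) := by
  rw [Finset.disjoint_left]
  intro v hv0 hvQ
  have hu := ((memD1_iff hp hq hpo hqo hpq hgcd hgp hgq hxp hxq).mp hv0).1
  exact ((isUnit_iff_phi hp hq hpq.ne).mp hu).2 ((memQ_iff hp hq hpq).mp hvQ).2

lemma imageQ {a : ZMod (p * q)} (ha : IsUnit a) :
    (DHQ p q).image (fun v => a * v) = DHQ p q := by
  haveI : Fact p.Prime := ⟨hp⟩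
  have hinj : Function.Injective (fun v : ZMod (p * q) => a * v) :=
    fun v w h => ha.mul_left_cancel h
  apply Finset.eq_of_subset_of_card_le
  · intro w hw
    rw [Finset.mem_image] at hw
    obtain ⟨v, hv, rfl⟩ := hw
    obtain ⟨hv1, hv2⟩ := (memQ_iff hp hq hpq).mp hv
    apply (memQ_iff hp hq hpq).mpr
    refine ⟨?_, by rw [map_mul, hv2, mul_zero]⟩
    rw [map_mul]
    exact mul_ne_zero ((isUnit_iff_phi hp hq hpq.ne).mp ha).1 hv1
  · rw [Finset.card_image_of_injective _ hinj]

lemma imageD1_of_D0 {a : ZMod (p * q)} (ha : a ∈ DHD0 p q g x) :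
    (DHD1 p q g x).image (fun v => a * v) = DHD1 p q g x := by
  haveI : Fact q.Prime := ⟨hq⟩
  obtain ⟨hau, hasq⟩ := (memD0_iff hp hq hpo hqo hpq hgcd hgp hgq hxp hxq).mp ha
  have hinj : Function.Injective (fun v : ZMod (p * q) => a * v) :=
    fun v w h => hau.mul_left_cancel h
  apply Finset.eq_of_subset_of_card_le
  · intro w hw
    rw [Finset.mem_image] at hw
    obtain ⟨v, hv, rfl⟩ := hw
    obtain ⟨hvu, hvnsq⟩ := (memD1_iff hp hq hpo hqo hpq hgcd hgp hgq hxp hxq).mp hv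
    apply (memD1_iff hp hq hpo hqo hpq hgcd hgp hgq hxp hxq).mpr
    refine ⟨hau.mul hvu, ?_⟩
    apply quadraticChar_neg_one_iff_not_isSquare.mp
    rw [map_mul, map_mul,
      (quadraticChar_one_iff_isSquare ((isUnit_iff_phi hp hq hpq.ne).mp hau).2).mpr hasq,
      quadraticChar_neg_one_iff_not_isSquare.mpr hvnsq]
    ring
  · rw [Finset.card_image_of_injective _ hinj]

lemma imageD1_of_D1 {a : ZMod (p * q)} (ha : a ∈ DHD1 p q g x) :
    (DHD1 p q g x).image (fun v => a * v) = DHD0 p q g x := by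
  haveI : Fact q.Prime := ⟨hq⟩
  obtain ⟨hau, hansq⟩ := (memD1_iff hp hq hpo hqo hpq hgcd hgp hgq hxp hxq).mp ha
  have hinj : Function.Injective (fun v : ZMod (p * q) => a * v) :=
    fun v w h => hau.mul_left_cancel h
  have hcard : (DHD1 p q g x).card = (DHD0 p q g x).card := by
    rw [DHD1]
    apply Finset.card_image_of_injective
    exact fun v w h => (g_unit hp hq hpq hgp hgq hxp hxq).mul_left_cancel h
  apply Finset.eq_of_subset_of_card_le
  · intro w hw
    rw [Finset.mem_image] at hw
    obtain ⟨v, hv, rfl⟩ := hw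
    obtain ⟨hvu, hvnsq⟩ := (memD1_iff hp hq hpo hqo hpq hgcd hgp hgq hxp hxq).mp hv
    apply (memD0_iff hp hq hpo hqo hpq hgcd hgp hgq hxp hxq).mpr
    refine ⟨hau.mul hvu, ?_⟩
    have hne : phiQ p q (a * v) ≠ 0 := by
      rw [map_mul]
      exact mul_ne_zero ((isUnit_iff_phi hp hq hpq.ne).mp hau).2
        ((isUnit_iff_phi hp hq hpq.ne).mp hvu).2
    apply (quadraticChar_one_iff_isSquare hne).mp
    rw [map_mul, map_mul, quadraticChar_neg_one_iff_not_isSquare.mpr hansq,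
      quadraticChar_neg_one_iff_not_isSquare.mpr hvnsq]
    ring
  · rw [Finset.card_image_of_injective _ hinj, hcard]

omit hpo hqo hgcd hgp hgq hxp hxq in
lemma Sval_transform (a : ZMod (p * q)) (ha : IsUnit a) :
    DHSval2 p q g x (DHxi (p * q) ^ a.val) =
      ∑ w ∈ (DHD1 p q g x ∪ DHQ p q).image (fun v => a * v), DHxi (p * q) ^ w.val := by
  haveI : NeZero (p * q) := ⟨Nat.mul_ne_zero hp.ne_zero hq.ne_zero⟩
  have hN : (p * q) ≠ 0 := Nat.mul_ne_zero hp.ne_zero hq.ne_zero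
  have hinj : ∀ v1 ∈ DHD1 p q g x ∪ DHQ p q, ∀ v2 ∈ DHD1 p q g x ∪ DHQ p q,
      a * v1 = a * v2 → v1 = v2 := fun v1 _ v2 _ h => ha.mul_left_cancel h
  rw [Finset.sum_image hinj]
  have hstep1 : DHSval2 p q g x (DHxi (p * q) ^ a.val)
      = ∑ v : ZMod (p * q),
          (if v ∈ DHD1 p q g x ∪ DHQ p q then (1 : ℂ) else 0) * DHxi (p * q) ^ ((a * v).val) := by
    unfold DHSval2
    apply Finset.sum_nbij' (fun i : ℕ => (i : ZMod (p * q))) (fun v : ZMod (p * q) => v.val)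
    · intro i _; exact Finset.mem_univ _
    · intro v _; exact Finset.mem_range.mpr (ZMod.val_lt v)
    · intro i hi; exact ZMod.val_cast_of_lt (Finset.mem_range.mp hi)
    · intro v _; exact ZMod.natCast_zmod_val v
    · intro i hi
      have h2 : (DHxi (p * q) ^ a.val) ^ i = DHxi (p * q) ^ ((a * (i : ZMod (p * q))).val) := by
        rw [← pow_mul, ZMod.val_mul, ← xi_pow_mod _ hN]
        congr 1
        rw [ZMod.val_cast_of_lt (Finset.mem_range.mp hi)]
      rw [h2]
      unfold DHs2
      by_cases h : (i : ZMod (p * q)) ∈ DHD1 p q g x ∪ DHQ p q <;> simp [h]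
  rw [hstep1]
  have hstep2 : ∀ v : ZMod (p * q),
      (if v ∈ DHD1 p q g x ∪ DHQ p q then (1 : ℂ) else 0) * DHxi (p * q) ^ ((a * v).val)
        = (if v ∈ DHD1 p q g x ∪ DHQ p q then DHxi (p * q) ^ ((a * v).val) else 0) := by
    intro v
    split <;> simp
  rw [Finset.sum_congr rfl (fun v _ => hstep2 v), Finset.sum_ite_mem, Finset.univ_inter]

end Main

theorem stmt12 (p q g x : ℕ) (hp : Nat.Prime p) (hq : Nat.Prime q)
    (hpo : Odd p) (hqo : Odd q) (hpq : p < q)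
    (hgcd : Nat.gcd (p - 1) (q - 1) = 2)
    (hgp : orderOf (g : ZMod p) = p - 1) (hgq : orderOf (g : ZMod q) = q - 1)
    (hxp : (x : ZMod p) = (g : ZMod p)) (hxq : (x : ZMod q) = 1) :
    (∀ a ∈ DHD0 p q g x,
      DHSval2 p q g x (DHxi (p * q) ^ a.val) = -DHeta (p * q) (DHD0 p q g x)) ∧
    (∀ a ∈ DHD1 p q g x,
      DHSval2 p q g x (DHxi (p * q) ^ a.val) = -DHeta (p * q) (DHD1 p q g x)) := by
  have hη := eta_sum_eq_one hp hq hpo hqo hpq hgcd hgp hgq hxp hxq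
  have hQsum := sum_DHQ (p := p) (q := q) hp hq
  have hd1Q := disjoint_D1_Q hp hq hpo hqo hpq hgcd hgp hgq hxp hxq
  have hd0Q := disjoint_D0_Q hp hq hpo hqo hpq hgcd hgp hgq hxp hxq
  constructor
  · intro a ha
    have hau := ((memD0_iff hp hq hpo hqo hpq hgcd hgp hgq hxp hxq).mp ha).1
    rw [Sval_transform hp hq hpq a hau, Finset.image_union,
      imageD1_of_D0 hp hq hpo hqo hpq hgcd hgp hgq hxp hxq ha,
      imageQ hp hq hpo hqo hpq hgcd hgp hgq hxp hxq hau, Finset.sum_union hd1Q, hQsum]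
    unfold DHeta
    linear_combination hη
  · intro a ha
    have hau := ((memD1_iff hp hq hpo hqo hpq hgcd hgp hgq hxp hxq).mp ha).1
    rw [Sval_transform hp hq hpq a hau, Finset.image_union,
      imageD1_of_D1 hp hq hpo hqo hpq hgcd hgp hgq hxp hxq ha,
      imageQ hp hq hpo hqo hpq hgcd hgp hgq hxp hxq hau, Finset.sum_union hd0Q, hQsum]
    unfold DHeta
    linear_combination hη
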